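/- Let f : [0, L] → ℝ be continuous, and define S* = { s > 0 : ∀ x, x ∈ [0, L] → x + s ∈ [0, L] → f(x + s) ≠ f(x) }. Then S* is additive: a ∈ S* and b ∈ S* imply a + b ∈ S*. -/
import Mathlib

lemma hopf_sign_const (L : ℝ) (f : ℝ → ℝ) (hf : ContinuousOn f (Set.Icc 0 L)) (s : ℝ)
    (hs : 0 < s)
    (h : ∀ x, x ∈ Set.Icc 0 L → x + s ∈ Set.Icc 0 L → f (x + s) ≠ f x) :
    (∀ t ∈ Set.Icc 0 (L - s), f t < f (t + s)) ∨ (∀ t ∈ Set.Icc 0 (L - s), f (t + s) < f t) := by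
  have hsub : Set.Icc 0 (L - s) ⊆ Set.Icc 0 L := by
    intro t ht; exact ⟨ht.1, by linarith [ht.2]⟩
  have hne : ∀ t ∈ Set.Icc 0 (L - s), f (t + s) ≠ f t := by
    intro t ht
    exact h t (hsub ht) ⟨by linarith [ht.1], by linarith [ht.2]⟩
  by_contra hc
  push_neg at hc
  obtain ⟨⟨t1, ht1, ht1'⟩, ⟨t2, ht2, ht2'⟩⟩ := hc
  have h1 : f (t1 + s) < f t1 := lt_of_le_of_ne ht1' (hne t1 ht1)
  have h2 : f t2 < f (t2 + s) := lt_of_le_of_ne ht2' (Ne.symm (hne t2 ht2))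
  set g : ℝ → ℝ := fun t => f (t + s) - f t with hg
  have hgc : ContinuousOn g (Set.Icc 0 (L - s)) := by
    apply ContinuousOn.sub
    · apply ContinuousOn.comp hf (by fun_prop)
      intro t ht
      simp only [Set.mem_Icc] at ht
      exact ⟨by simp; linarith [ht.1], by simp; linarith [ht.2]⟩
    · exact hf.mono hsub
  have huIcc : Set.uIcc t1 t2 ⊆ Set.Icc 0 (L - s) := by
    apply Set.uIcc_subset_Icc <;> simp_all [Set.mem_Icc]
  have hmem : (0 : ℝ) ∈ Set.uIcc (g t1) (g t2) := by
    rw [Set.mem_uIcc]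
    left; constructor <;> simp [hg] <;> linarith
  obtain ⟨t, ht, hgt⟩ := intermediate_value_uIcc (hgc.mono huIcc) hmem
  have := hne t (huIcc ht)
  simp only [hg] at hgt
  apply this; linarith

theorem hopf_for_graphs (L : ℝ) (f : ℝ → ℝ) (hf : ContinuousOn f (Set.Icc 0 L))
    (a b : ℝ)
    (ha : a ∈ {s : ℝ | 0 < s ∧ ∀ x, x ∈ Set.Icc 0 L → x + s ∈ Set.Icc 0 L → f (x + s) ≠ f x})
    (hb : b ∈ {s : ℝ | 0 < s ∧ ∀ x, x ∈ Set.Icc 0 L → x + s ∈ Set.Icc 0 L → f (x + s) ≠ f x}) :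
    a + b ∈ {s : ℝ | 0 < s ∧ ∀ x, x ∈ Set.Icc 0 L → x + s ∈ Set.Icc 0 L → f (x + s) ≠ f x} := by
  obtain ⟨hapos, hA⟩ := ha
  obtain ⟨hbpos, hB⟩ := hb
  refine ⟨by linarith, ?_⟩
  intro x hx hxc heq
  simp only [Set.mem_Icc] at hx hxc
  have HA := hopf_sign_const L f hf a hapos hA
  have HB := hopf_sign_const L f hf b hbpos hB
  -- common facts
  have hx0 : 0 ≤ x := hx.1
  have hxL : x + a + b ≤ L := by linarith [hxc.2]
  -- minimum point of f on [x, x+(a+b)]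
  obtain ⟨m, hm, hmin⟩ : ∃ m ∈ Set.Icc x (x + (a + b)), IsMinOn f (Set.Icc x (x + (a + b))) m := by
    apply IsCompact.exists_isMinOn isCompact_Icc ⟨x, by constructor <;> linarith⟩
    apply hf.mono
    intro t ht; exact ⟨by linarith [ht.1], by linarith [ht.2]⟩
  simp only [Set.mem_Icc] at hm
  rcases HA with hApos | hAneg <;> rcases HB with hBpos | hBneg
  · -- both positive: f x < f (x+b) < f (x+b+a) = f (x+(a+b))
    have h1 : f x < f (x + b) := hBpos x ⟨hx0, by linarith⟩
    have h2 : f (x + b) < f (x + b + a) := hApos (x + b) ⟨by linarith, by linarith⟩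
    have : x + b + a = x + (a + b) := by ring
    rw [this] at h2
    linarith [heq ▸ h2]
  · -- g_a > 0, g_b < 0 : min point contradiction
    rcases le_or_gt m (x + a) with hcase | hcase
    · have h1 : f (m + b) < f m := hBneg m ⟨by linarith, by linarith⟩
      have h2 := hmin (show m + b ∈ Set.Icc x (x + (a + b)) from Set.mem_Icc.mpr ⟨by linarith, by linarith⟩)
      exact absurd h2 (by simp; linarith)
    · have h1 : f (m - a) < f (m - a + a) := hApos (m - a) ⟨by linarith, by linarith⟩
      have : m - a + a = m := by ring
      rw [this] at h1
      have h2 := hmin (show m - a ∈ Set.Icc x (x + (a + b)) from Set.mem_Icc.mpr ⟨by linarith, by linarith⟩)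
      exact absurd h2 (by simp; linarith)
  · -- g_a < 0, g_b > 0
    rcases le_or_gt m (x + b) with hcase | hcase
    · have h1 : f (m + a) < f m := hAneg m ⟨by linarith, by linarith⟩
      have h2 := hmin (show m + a ∈ Set.Icc x (x + (a + b)) from Set.mem_Icc.mpr ⟨by linarith, by linarith⟩)
      exact absurd h2 (by simp; linarith)
    · have h1 : f (m - b) < f (m - b + b) := hBpos (m - b) ⟨by linarith, by linarith⟩
      have : m - b + b = m := by ring
      rw [this] at h1
      have h2 := hmin (show m - b ∈ Set.Icc x (x + (a + b)) from Set.mem_Icc.mpr ⟨by linarith, by linarith⟩)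
      exact absurd h2 (by simp; linarith)
  · -- both negative
    have h1 : f (x + b) < f x := hBneg x ⟨hx0, by linarith⟩
    have h2 : f (x + b + a) < f (x + b) := hAneg (x + b) ⟨by linarith, by linarith⟩
    have : x + b + a = x + (a + b) := by ring
    rw [this] at h2
    linarith [heq ▸ h2]
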